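/- Let A be a local Artinian Gorenstein k-algebra with maximal ideal M, Hilbert function (1, n, 2, 1, …, 1), level e = d−n−1 ≥ 3, and char(k) > e. Suppose a₁, a₂ ∈ M satisfy M² = (a₁², a₂²) + M³ and a₁a₂ ∈ M³. Then M^h = (a₁^h, a₂^h) + M^{h+1} for all h ≥ 2, and after possibly swapping a₁ and a₂ one has a₁^e ≠ 0 and M^h = (a₁^h) for all h ≥ 3. -/
import Mathlib


open IsLocalRing Submodule Module

/-- `dim_k (M^i / M^{i+1})`. -/
noncomputable def hilbFn (k : Type*) {A : Type*} [Field k] [CommRing A] [Algebra k A]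
    (M : Ideal A) (i : ℕ) : ℕ :=
  Module.finrank k
    ((Submodule.restrictScalars k (M ^ i)) ⧸
      (Submodule.comap (Submodule.restrictScalars k (M ^ i)).subtype
        (Submodule.restrictScalars k (M ^ (i + 1)))))

/-- The socle `Soc(A) = (0 : M)`. -/
noncomputable def socle (A : Type*) [CommRing A] [IsLocalRing A] : Ideal A :=
  Submodule.colon (⊥ : Ideal A) (IsLocalRing.maximalIdeal A)

section Aux

variable {k A : Type*} [Field k] [CommRing A] [Algebra k A]

/-- Key multiplication lemma: `m * a₁ ^ (h'+2) ∈ (a₁^(h'+3)) + M^(h'+4)`. -/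
lemma auxL {M : Ideal A} (a₁ a₂ : A) (ha₁ : a₁ ∈ M) (ha₂ : a₂ ∈ M)
    (hsq : M ^ 2 = Ideal.span {a₁ ^ 2, a₂ ^ 2} ⊔ M ^ 3)
    (hprod : a₁ * a₂ ∈ M ^ 3) (h' : ℕ) (m : A) (hm : m ∈ M) :
    m * a₁ ^ (h' + 2) ∈ Ideal.span {a₁ ^ (h' + 3)} ⊔ M ^ (h' + 4) := by
  have h1 : m * a₁ ∈ M ^ 2 := by
    rw [pow_two]; exact Ideal.mul_mem_mul hm ha₁
  rw [hsq] at h1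
  obtain ⟨s, hs, z, hz, hsz⟩ := Submodule.mem_sup.mp h1
  obtain ⟨x, y, hxy⟩ := Ideal.mem_span_pair.mp hs
  have key : m * a₁ ^ (h' + 2) =
      x * a₁ ^ (h' + 3) +
      ((y * (a₂ * a₁ ^ h')) * (a₁ * a₂) + a₁ ^ (h' + 1) * z) := by
    have h2 : m * a₁ ^ (h' + 2) = (m * a₁) * a₁ ^ (h' + 1) := by ring
    rw [h2, ← hsz, ← hxy]; ring
  rw [key]
  refine Submodule.add_mem_sup ?_ (add_mem ?_ ?_)
  · exact Ideal.mem_span_singleton.mpr ⟨x, mul_comm _ _⟩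
  · have hmem : y * (a₂ * a₁ ^ h') ∈ M ^ (h' + 1) := by
      refine Ideal.mul_mem_left _ _ ?_
      rw [pow_succ']
      exact Ideal.mul_mem_mul ha₂ (Ideal.pow_mem_pow ha₁ h')
    have := Ideal.mul_mem_mul hmem hprod
    rwa [← pow_add] at this
  · have := Ideal.mul_mem_mul (Ideal.pow_mem_pow ha₁ (h' + 1)) hz
    rwa [← pow_add] at this

/-- Part 1: `M^h = (a₁^h, a₂^h) + M^(h+1)` for all `h ≥ 2`. -/
lemma part1 {M : Ideal A} (a₁ a₂ : A) (ha₁ : a₁ ∈ M) (ha₂ : a₂ ∈ M)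
    (hsq : M ^ 2 = Ideal.span {a₁ ^ 2, a₂ ^ 2} ⊔ M ^ 3)
    (hprod : a₁ * a₂ ∈ M ^ 3) :
    ∀ h : ℕ, 2 ≤ h → M ^ h = Ideal.span {a₁ ^ h, a₂ ^ h} ⊔ M ^ (h + 1) := by
  have hsq' : M ^ 2 = Ideal.span {a₂ ^ 2, a₁ ^ 2} ⊔ M ^ 3 := by
    rwa [Set.pair_comm]
  have hprod' : a₂ * a₁ ∈ M ^ 3 := by rwa [mul_comm]
  intro h hh
  induction h, hh using Nat.le_induction with
  | base => exact hsq
  | succ h hh ih =>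
    obtain ⟨h', rfl⟩ : ∃ h', h = h' + 2 := ⟨h - 2, by omega⟩
    apply le_antisymm
    · have step : M ^ (h' + 2 + 1) = (Ideal.span {a₁ ^ (h' + 2), a₂ ^ (h' + 2)} ⊔ M ^ (h' + 2 + 1)) * M := by
        rw [← ih, ← pow_succ]
      rw [step, Submodule.sup_mul]
      apply sup_le
      · apply Submodule.mul_le.mpr
        intro s hs m hm
        obtain ⟨x, y, hxy⟩ := Ideal.mem_span_pair.mp hs
        have hsm : s * m = (x * m) * a₁ ^ (h' + 2) + (y * m) * a₂ ^ (h' + 2) := by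
          rw [← hxy]; ring
        rw [hsm]
        have hle1 : Ideal.span {a₁ ^ (h' + 3)} ⊔ M ^ (h' + 4) ≤
            Ideal.span {a₁ ^ (h' + 3), a₂ ^ (h' + 3)} ⊔ M ^ (h' + 4) :=
          sup_le_sup_right (Ideal.span_mono (by simp)) _
        have hle2 : Ideal.span {a₂ ^ (h' + 3)} ⊔ M ^ (h' + 4) ≤
            Ideal.span {a₁ ^ (h' + 3), a₂ ^ (h' + 3)} ⊔ M ^ (h' + 4) :=
          sup_le_sup_right (Ideal.span_mono (by simp)) _
        refine add_mem (hle1 (auxL a₁ a₂ ha₁ ha₂ hsq hprod h' _ (Ideal.mul_mem_left _ _ hm)))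
          (hle2 (auxL a₂ a₁ ha₂ ha₁ hsq' hprod' h' _ (Ideal.mul_mem_left _ _ hm)))
      · rw [← pow_succ]
        exact le_sup_right
    · apply sup_le
      · rw [Ideal.span_le]
        rintro z (rfl | rfl)
        · exact Ideal.pow_mem_pow ha₁ _
        · exact Ideal.pow_mem_pow ha₂ _
      · exact Ideal.pow_le_pow_right (by omega)

/-- If the `i`-th Hilbert value is `1`, then `M^i ≠ M^(i+1)`. -/
lemma quot_ne (k : Type*) [Field k] {A : Type*} [CommRing A] [Algebra k A]
    {M : Ideal A} {i : ℕ} (h1 : hilbFn k M i = 1) : ¬ M ^ i ≤ M ^ (i + 1) := by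
  intro hle
  unfold hilbFn at h1
  have htop : (Submodule.comap (Submodule.restrictScalars k (M ^ i)).subtype
      (Submodule.restrictScalars k (M ^ (i + 1)))) = ⊤ := by
    rw [eq_top_iff']
    rintro ⟨v, hv⟩
    simpa using hle hv
  have hs : Subsingleton ((Submodule.restrictScalars k (M ^ i)) ⧸
      (Submodule.comap (Submodule.restrictScalars k (M ^ i)).subtype
        (Submodule.restrictScalars k (M ^ (i + 1))))) :=
    Submodule.Quotient.subsingleton_iff.mpr htop
  rw [finrank_zero_of_subsingleton] at h1
  omega

/-- If the `i`-th Hilbert value is `1` and `x ∈ M^i \ M^(i+1)`, every element of `M^i`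
is a `k`-multiple of `x` modulo `M^(i+1)`. -/
lemma quot_rel (k : Type*) [Field k] {A : Type*} [CommRing A] [Algebra k A]
    {M : Ideal A} {i : ℕ} (h1 : hilbFn k M i = 1) {x : A} (hx : x ∈ M ^ i)
    (hx' : x ∉ M ^ (i + 1)) {y : A} (hy : y ∈ M ^ i) :
    ∃ c : k, y - algebraMap k A c * x ∈ M ^ (i + 1) := by
  unfold hilbFn at h1
  set N := Submodule.comap (Submodule.restrictScalars k (M ^ i)).subtype
      (Submodule.restrictScalars k (M ^ (i + 1))) with hN
  have hxbar : (Submodule.Quotient.mk (p := N) ⟨x, hx⟩ :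
      (Submodule.restrictScalars k (M ^ i)) ⧸ N) ≠ 0 := by
    intro hmem0
    rw [Submodule.Quotient.mk_eq_zero] at hmem0
    exact hx' (by simpa [hN] using hmem0)
  obtain ⟨c, hc⟩ := (finrank_eq_one_iff_of_nonzero' _ hxbar).mp h1
    (Submodule.Quotient.mk ⟨y, hy⟩)
  refine ⟨c, ?_⟩
  have h0 : Submodule.Quotient.mk (p := N) (⟨y, hy⟩ - c • ⟨x, hx⟩) = 0 := by
    rw [Submodule.Quotient.mk_sub, Submodule.Quotient.mk_smul, hc, sub_self]
  rw [Submodule.Quotient.mk_eq_zero] at h0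
  have : y - c • x ∈ M ^ (i + 1) := by simpa [hN] using h0
  rwa [Algebra.smul_def] at this

/-- The main lemma for the second part, applied to the good choice of generator. -/
lemma final (k : Type*) [Field k] {A : Type*} [CommRing A] [Algebra k A]
    {M : Ideal A} (b₁ b₂ : A) (hb₁ : b₁ ∈ M) (hb₂ : b₂ ∈ M)
    (hsq : M ^ 2 = Ideal.span {b₁ ^ 2, b₂ ^ 2} ⊔ M ^ 3)
    (hprod : b₁ * b₂ ∈ M ^ 3)
    (e : ℕ) (he : 3 ≤ e)
    (hHi : ∀ i : ℕ, 3 ≤ i → i ≤ e → hilbFn k M i = 1)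
    (hlev : M ^ e ≠ ⊥) (hlev' : M ^ (e + 1) = ⊥)
    (h3 : b₁ ^ 3 ∉ M ^ 4) :
    b₁ ^ e ≠ 0 ∧ ∀ h : ℕ, 3 ≤ h → M ^ h = Ideal.span {b₁ ^ h} := by
  have p1 := part1 b₁ b₂ hb₁ hb₂ hsq hprod
  -- The inductive dichotomy.
  have Q : ∀ h : ℕ, 3 ≤ h → h ≤ e →
      b₁ ^ h ∉ M ^ (h + 1) ∧ ∃ c : k, b₂ ^ h - algebraMap k A c * b₁ ^ h ∈ M ^ (h + 1) := by
    intro h hh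
    induction h, hh using Nat.le_induction with
    | base =>
      intro _
      exact ⟨h3, quot_rel k (hHi 3 le_rfl he) (Ideal.pow_mem_pow hb₁ 3) h3
        (Ideal.pow_mem_pow hb₂ 3)⟩
    | succ h hh ih =>
      intro hhe
      obtain ⟨hb1h, c, hc⟩ := ih (by omega)
      obtain ⟨h', rfl⟩ : ∃ h', h = h' + 3 := ⟨h - 3, by omega⟩
      -- b₂^(h+1) ∈ M^(h+2)
      have hb2s : b₂ ^ (h' + 4) ∈ M ^ (h' + 5) := by
        have key : b₂ ^ (h' + 4) =
            (b₂ ^ (h' + 3) - algebraMap k A c * b₁ ^ (h' + 3)) * b₂ +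
            (algebraMap k A c * b₁ ^ (h' + 2)) * (b₁ * b₂) := by ring
        rw [key]
        refine add_mem ?_ ?_
        · have := Ideal.mul_mem_mul hc hb₂
          rwa [← pow_succ] at this
        · have hmem : algebraMap k A c * b₁ ^ (h' + 2) ∈ M ^ (h' + 2) :=
            Ideal.mul_mem_left _ _ (Ideal.pow_mem_pow hb₁ _)
          have := Ideal.mul_mem_mul hmem hprod
          rwa [← pow_add] at this
      have hMh1 : M ^ (h' + 4) = Ideal.span {b₁ ^ (h' + 4)} ⊔ M ^ (h' + 5) := by
        rw [p1 (h' + 4) (by omega)]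
        apply le_antisymm
        · apply sup_le _ le_sup_right
          rw [Ideal.span_le]
          rintro z (rfl | rfl)
          · exact Submodule.mem_sup_left (Ideal.subset_span rfl)
          · exact Submodule.mem_sup_right hb2s
        · exact sup_le (le_sup_of_le_left (Ideal.span_mono (by simp))) le_sup_right
      have hb1h1 : b₁ ^ (h' + 4) ∉ M ^ (h' + 5) := by
        intro hin
        refine quot_ne k (hHi (h' + 4) (by omega) hhe) ?_
        rw [hMh1]
        exact sup_le ((Ideal.span_le).mpr (by rintro z rfl; exact hin)) le_rfl
      exact ⟨hb1h1, 0, by simpa using hb2s⟩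
  have key : ∀ h : ℕ, 3 ≤ h → h ≤ e → M ^ h = Ideal.span {b₁ ^ h} ⊔ M ^ (h + 1) := by
    intro h h3' hhe
    obtain ⟨hb1, c, hc⟩ := Q h h3' hhe
    rw [p1 h (by omega)]
    apply le_antisymm
    · apply sup_le _ le_sup_right
      rw [Ideal.span_le]
      rintro z (rfl | rfl)
      · exact Submodule.mem_sup_left (Ideal.subset_span rfl)
      · have : b₂ ^ h = algebraMap k A c * b₁ ^ h + (b₂ ^ h - algebraMap k A c * b₁ ^ h) := by
          ring
        rw [this]
        exact add_mem (Submodule.mem_sup_left (Ideal.mem_span_singleton.mpr ⟨_, mul_comm _ _⟩))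
          (Submodule.mem_sup_right hc)
    · exact sup_le (le_sup_of_le_left (Ideal.span_mono (by simp))) le_sup_right
  -- descending induction down from e
  have main : ∀ j : ℕ, ∀ h : ℕ, 3 ≤ h → h ≤ e → e - h = j → M ^ h = Ideal.span {b₁ ^ h} := by
    intro j
    induction j with
    | zero =>
      intro h h3' hhe hj
      have : h = e := by omega
      subst this
      rw [key h h3' le_rfl, hlev', sup_bot_eq]
    | succ j ih =>
      intro h h3' hhe hj
      have hsub : M ^ (h + 1) = Ideal.span {b₁ ^ (h + 1)} := ih (h + 1) (by omega) (by omega) (by omega)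
      rw [key h h3' hhe, hsub, sup_eq_left.mpr]
      rw [Ideal.span_le]
      rintro z rfl
      exact Ideal.mem_span_singleton.mpr ⟨b₁, by ring⟩
  have hfor : ∀ h : ℕ, 3 ≤ h → M ^ h = Ideal.span {b₁ ^ h} := by
    intro h h3'
    by_cases hhe : h ≤ e
    · exact main (e - h) h h3' hhe rfl
    · have h0 : M ^ h = ⊥ := by
        rw [← le_bot_iff, ← hlev']
        exact Ideal.pow_le_pow_right (by omega)
      have hb : b₁ ^ h = 0 := by
        have := Ideal.pow_mem_pow hb₁ h
        rw [h0] at this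
        simpa using this
      rw [h0, hb, Ideal.span_singleton_eq_bot.mpr rfl]
  refine ⟨?_, hfor⟩
  intro h0
  apply hlev
  rw [hfor e he, h0, Ideal.span_singleton_eq_bot.mpr rfl]

end Aux

theorem stmt8 (k A : Type*) [Field k] [IsAlgClosed k]
    [CommRing A] [Algebra k A] [IsLocalRing A] [IsArtinianRing A]
    (hres : Function.Bijective (algebraMap k (IsLocalRing.ResidueField A)))
    (hGor : Module.finrank k (Submodule.restrictScalars k (socle A)) = 1)
    (n e : ℕ) (hn : 2 ≤ n) (he : 3 ≤ e)
    (hchar : ∀ p : ℕ, CharP k p → p = 0 ∨ e < p)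
    (hH0 : hilbFn k (IsLocalRing.maximalIdeal A) 0 = 1)
    (hH1 : hilbFn k (IsLocalRing.maximalIdeal A) 1 = n)
    (hH2 : hilbFn k (IsLocalRing.maximalIdeal A) 2 = 2)
    (hHi : ∀ i : ℕ, 3 ≤ i → i ≤ e → hilbFn k (IsLocalRing.maximalIdeal A) i = 1)
    (hlev : IsLocalRing.maximalIdeal A ^ e ≠ ⊥)
    (hlev' : IsLocalRing.maximalIdeal A ^ (e + 1) = ⊥)
    (a₁ a₂ : A) (ha₁ : a₁ ∈ IsLocalRing.maximalIdeal A) (ha₂ : a₂ ∈ IsLocalRing.maximalIdeal A)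
    (hsq : IsLocalRing.maximalIdeal A ^ 2 =
      Ideal.span {a₁ ^ 2, a₂ ^ 2} ⊔ IsLocalRing.maximalIdeal A ^ 3)
    (hprod : a₁ * a₂ ∈ IsLocalRing.maximalIdeal A ^ 3) :
    (∀ h : ℕ, 2 ≤ h → IsLocalRing.maximalIdeal A ^ h =
      Ideal.span {a₁ ^ h, a₂ ^ h} ⊔ IsLocalRing.maximalIdeal A ^ (h + 1)) ∧
    ∃ b₁ b₂ : A, ((b₁, b₂) = (a₁, a₂) ∨ (b₁, b₂) = (a₂, a₁)) ∧
      b₁ ^ e ≠ 0 ∧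
      ∀ h : ℕ, 3 ≤ h → IsLocalRing.maximalIdeal A ^ h = Ideal.span {b₁ ^ h} := by
  set M := IsLocalRing.maximalIdeal A with hM
  have p1 := part1 a₁ a₂ ha₁ ha₂ hsq hprod
  refine ⟨p1, ?_⟩
  have hsq' : M ^ 2 = Ideal.span {a₂ ^ 2, a₁ ^ 2} ⊔ M ^ 3 := by rwa [Set.pair_comm]
  have hprod' : a₂ * a₁ ∈ M ^ 3 := by rwa [mul_comm]
  have hchoice : a₁ ^ 3 ∉ M ^ 4 ∨ a₂ ^ 3 ∉ M ^ 4 := by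
    by_contra hcon
    push_neg at hcon
    refine quot_ne k (hHi 3 le_rfl he) ?_
    rw [p1 3 (by omega)]
    apply sup_le _ le_rfl
    rw [Ideal.span_le]
    rintro z (rfl | rfl)
    · exact hcon.1
    · exact hcon.2
  rcases hchoice with hch | hch
  · obtain ⟨hne, hf⟩ := final k a₁ a₂ ha₁ ha₂ hsq hprod e he hHi hlev hlev' hch
    exact ⟨a₁, a₂, Or.inl rfl, hne, hf⟩
  · obtain ⟨hne, hf⟩ := final k a₂ a₁ ha₂ ha₁ hsq' hprod' e he hHi hlev hlev' hch
    exact ⟨a₂, a₁, Or.inr rfl, hne, hf⟩
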